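/- Suppose all N subjects share a common design matrix W and matrix V, each yᵢ is an integrable random vector with mean E[yᵢ] = W(θ₀ + δ ∘ hᵢ / √N), and θ̂ is a random vector satisfying the score equation Σ_{i=1}^{N} u(yᵢ, θ̂) = 0 almost surely, with the estimated score process integrable. Then for every M ≤ N, at t = M/N, E[ N^{−1/2} Σ_{i=1}^{M} u(yᵢ, θ̂) ] = J · t · δ ∘ (h̄_M − h̄_N), where h̄_M = M^{−1} Σ_{i=1}^{M} hᵢ and h̄_N = N^{−1} Σ_{i=1}^{N} hᵢ. (This is the exact finite-sample form of the drift term J^{1/2} t_g δ ∘ (h̄_g − h̄) of the canonical monitoring process under local alternatives in Theorem 3, before standardization by J^{−1/2}.) -/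

import Mathlib

open Matrix Finset MeasureTheory

/-- With common `W` and `V`, mean `E[yᵢ] = W(θ₀ + δ ∘ hᵢ/√N)`,
and a random `θ̂` solving the score equation `Σ_{i=1}^N u(yᵢ, θ̂) = 0` a.s.
(with the estimated score process integrable), for every `M ≤ N`, at `t = M/N`,
`E[N^{−1/2} Σ_{i=1}^M u(yᵢ, θ̂)] = J · t · δ ∘ (h̄_M − h̄_N)`, where
`h̄_M = M⁻¹ Σ_{i=1}^M hᵢ` and `h̄_N = N⁻¹ Σ_{i=1}^N hᵢ`. -/
theorem estimated_score_process_drift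
    {n p : ℕ} (σ : ℝ) (hσ : 0 < σ)
    (W : Matrix (Fin n) (Fin p) ℝ) (V : Matrix (Fin n) (Fin n) ℝ)
    (hV : V.PosDef)
    (u : (Fin n → ℝ) → (Fin p → ℝ) → (Fin p → ℝ))
    (hu : ∀ y θ, u y θ = (σ ^ 2)⁻¹ • ((Wᵀ * V⁻¹) *ᵥ (y - W *ᵥ θ)))
    (J : Matrix (Fin p) (Fin p) ℝ)
    (hJ : J = (σ ^ 2)⁻¹ • (Wᵀ * V⁻¹ * W))
    {Ω : Type*} [MeasureSpace Ω] [IsProbabilityMeasure (volume : Measure Ω)]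
    (N : ℕ) (hN : 0 < N) (y : ℕ → Ω → Fin n → ℝ)
    (hyInt : ∀ i, i < N → ∀ j, Integrable (fun ω => y i ω j))
    (θ₀ δ : Fin p → ℝ) (h : ℕ → Fin p → ℝ)
    (hmean : ∀ i, i < N → ∀ j,
      ∫ ω, y i ω j = (W *ᵥ (θ₀ + (Real.sqrt N)⁻¹ • (δ * h i))) j)
    (θhat : Ω → Fin p → ℝ)
    (hscore : ∀ᵐ ω, ∑ i ∈ range N, u (y i ω) (θhat ω) = 0)
    (hestInt : ∀ i, i < N → ∀ k, Integrable (fun ω => u (y i ω) (θhat ω) k))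
    (M : ℕ) (hM : 0 < M) (hMN : M ≤ N)
    (hbarM hbarN : Fin p → ℝ)
    (hhbarM : hbarM = (M : ℝ)⁻¹ • ∑ i ∈ range M, h i)
    (hhbarN : hbarN = (N : ℝ)⁻¹ • ∑ i ∈ range N, h i) :
    ∀ k, ∫ ω, ((Real.sqrt N)⁻¹ • ∑ i ∈ range M, u (y i ω) (θhat ω)) k =
      (((M : ℝ) / N) • (J *ᵥ (δ * (hbarM - hbarN)))) k := by
  intro k
  have hNne : (N:ℝ) ≠ 0 := Nat.cast_ne_zero.mpr hN.ne'
  have hMne : (M:ℝ) ≠ 0 := Nat.cast_ne_zero.mpr hM.ne'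
  set s : ℝ := (Real.sqrt N)⁻¹ with hs
  set c : ℝ := (σ ^ 2)⁻¹ with hc
  set A : Matrix (Fin p) (Fin n) ℝ := Wᵀ * V⁻¹ with hA
  set r : ℝ := (M : ℝ) / N with hr
  have hss : s * s = (N:ℝ)⁻¹ := by
    rw [hs, ← mul_inv, Real.mul_self_sqrt (Nat.cast_nonneg N)]
  have hcne : c ≠ 0 := inv_ne_zero (pow_ne_zero 2 hσ.ne')
  have hrN : r * N = M := by rw [hr, div_mul_cancel₀ _ hNne]
  -- a.e. rewrite of the integrand using the score equation
  have key : ∀ᵐ ω, ((Real.sqrt N)⁻¹ • ∑ i ∈ range M, u (y i ω) (θhat ω)) k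
      = s * c * ∑ j, A k j *
        ((∑ i ∈ range M, y i ω j) - r * ∑ i ∈ range N, y i ω j) := by
    filter_upwards [hscore] with ω hω
    have hb : ∑ i ∈ range N, (A *ᵥ (y i ω - W *ᵥ θhat ω)) k = 0 := by
      have h1 := congrFun hω k
      simp only [Finset.sum_apply, hu, Pi.smul_apply, smul_eq_mul, Pi.zero_apply,
        ← Finset.mul_sum] at h1
      rcases mul_eq_zero.mp h1 with h2 | h2
      · exact absurd h2 hcne
      · exact h2
    have hb' : ∑ i ∈ range N, (A *ᵥ y i ω) k
        = (N : ℝ) * (A *ᵥ (W *ᵥ θhat ω)) k := by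
      have : ∀ i, (A *ᵥ (y i ω - W *ᵥ θhat ω)) k
          = (A *ᵥ y i ω) k - (A *ᵥ (W *ᵥ θhat ω)) k := by
        intro i; rw [mulVec_sub]; rfl
      simp only [this, Finset.sum_sub_distrib, Finset.sum_const, Finset.card_range,
        nsmul_eq_mul, sub_eq_zero] at hb
      exact hb
    have hswap : ∀ (F : Finset ℕ), ∑ j, A k j * ∑ i ∈ F, y i ω j
        = ∑ i ∈ F, (A *ᵥ y i ω) k := by
      intro F
      simp only [Finset.mul_sum, mulVec, dotProduct]
      exact Finset.sum_comm
    have hLHS : ((Real.sqrt N)⁻¹ • ∑ i ∈ range M, u (y i ω) (θhat ω)) k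
        = s * c * ((∑ i ∈ range M, (A *ᵥ y i ω) k)
            - (M : ℝ) * (A *ᵥ (W *ᵥ θhat ω)) k) := by
      simp only [Pi.smul_apply, Finset.sum_apply, hu, smul_eq_mul]
      have : ∀ i, (A *ᵥ (y i ω - W *ᵥ θhat ω)) k
          = (A *ᵥ y i ω) k - (A *ᵥ (W *ᵥ θhat ω)) k := by
        intro i; rw [mulVec_sub]; rfl
      simp only [this, ← Finset.mul_sum, Finset.sum_sub_distrib, Finset.sum_const,
        Finset.card_range, nsmul_eq_mul]
      ring
    rw [hLHS]
    simp only [mul_sub, Finset.sum_sub_distrib, hswap, hb']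
    have h3 : ∑ x, A k x * (r * ∑ i ∈ range N, y i ω x)
        = r * ∑ x, A k x * ∑ i ∈ range N, y i ω x := by
      rw [Finset.mul_sum]; exact Finset.sum_congr rfl fun x _ => by ring
    rw [h3, hswap, hb', ← mul_assoc r, hrN]
  rw [integral_congr_ae key]
  -- integrability
  have hintInner : ∀ j : Fin n, Integrable (fun ω =>
      (∑ i ∈ range M, y i ω j) - r * ∑ i ∈ range N, y i ω j) := by
    intro j
    refine Integrable.sub ?_ ?_
    · exact integrable_finset_sum _ fun i hi =>
        hyInt i (lt_of_lt_of_le (mem_range.mp hi) hMN) j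
    · exact (integrable_finset_sum _ fun i hi => hyInt i (mem_range.mp hi) j).const_mul r
  rw [integral_const_mul]
  rw [integral_finset_sum _ (fun j _ => (hintInner j).const_mul (A k j))]
  have hint1 : ∀ j : Fin n, ∫ ω, A k j *
      ((∑ i ∈ range M, y i ω j) - r * ∑ i ∈ range N, y i ω j)
      = A k j * ((∑ i ∈ range M, ∫ ω, y i ω j)
          - r * ∑ i ∈ range N, ∫ ω, y i ω j) := by
    intro j
    rw [integral_const_mul, integral_sub
      (integrable_finset_sum _ fun i hi => hyInt i (lt_of_lt_of_le (mem_range.mp hi) hMN) j)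
      ((integrable_finset_sum _ fun i hi => hyInt i (mem_range.mp hi) j).const_mul r),
      integral_const_mul,
      integral_finset_sum _ (fun i hi => hyInt i (lt_of_lt_of_le (mem_range.mp hi) hMN) j),
      integral_finset_sum _ (fun i hi => hyInt i (mem_range.mp hi) j)]
  simp only [hint1]
  -- plug in the means
  have hmean' : ∀ i ∈ range M, ∀ j, ∫ ω, y i ω j
      = (W *ᵥ (θ₀ + s • (δ * h i))) j := fun i hi j =>
    hmean i (lt_of_lt_of_le (mem_range.mp hi) hMN) j
  have hmean'' : ∀ i ∈ range N, ∀ j, ∫ ω, y i ω j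
      = (W *ᵥ (θ₀ + s • (δ * h i))) j := fun i hi j =>
    hmean i (mem_range.mp hi) j
  -- scalar sums of h
  have hhl : ∀ l, ∑ i ∈ range M, h i l = (M:ℝ) * hbarM l := by
    intro l
    rw [hhbarM]
    simp only [Pi.smul_apply, Finset.sum_apply, smul_eq_mul]
    field_simp
  have hhl' : ∀ l, ∑ i ∈ range N, h i l = (N:ℝ) * hbarN l := by
    intro l
    rw [hhbarN]
    simp only [Pi.smul_apply, Finset.sum_apply, smul_eq_mul]
    field_simp
  -- the expected drift per coordinate j
  have hEj : ∀ j : Fin n,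
      (∑ i ∈ range M, (W *ᵥ (θ₀ + s • (δ * h i))) j)
        - r * ∑ i ∈ range N, (W *ᵥ (θ₀ + s • (δ * h i))) j
      = (s * M) * ∑ l, W j l * (δ l * (hbarM l - hbarN l)) := by
    intro j
    have expand : ∀ (F : Finset ℕ), ∑ i ∈ F, (W *ᵥ (θ₀ + s • (δ * h i))) j
        = ∑ l, W j l * ((F.card : ℝ) * θ₀ l + s * (δ l * ∑ i ∈ F, h i l)) := by
      intro F
      simp only [mulVec, dotProduct, Pi.add_apply, Pi.smul_apply, Pi.mul_apply,
        smul_eq_mul]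
      rw [Finset.sum_comm]
      refine Finset.sum_congr rfl fun l _ => ?_
      rw [← Finset.mul_sum, Finset.sum_add_distrib, Finset.sum_const, nsmul_eq_mul]
      have : ∑ i ∈ F, s * (δ l * h i l) = s * (δ l * ∑ i ∈ F, h i l) := by
        rw [Finset.mul_sum, Finset.mul_sum]
      rw [this]
    rw [expand, expand]
    simp only [Finset.card_range, hhl, hhl']
    rw [Finset.mul_sum, ← Finset.sum_sub_distrib, Finset.mul_sum]
    refine Finset.sum_congr rfl fun l _ => ?_
    have : r * ((N:ℝ) * hbarN l) = (M:ℝ) * hbarN l := by rw [← mul_assoc, hrN]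
    have hrN' : r * (N:ℝ) = (M:ℝ) := hrN
    field_simp [hr]
    linear_combination (-(W j l * θ₀ l) - W j l * s * δ l * hbarN l) * hrN'
  have hplug : ∀ j : Fin n,
      (∑ i ∈ range M, ∫ ω, y i ω j) - r * ∑ i ∈ range N, ∫ ω, y i ω j
      = (s * M) * ∑ l, W j l * (δ l * (hbarM l - hbarN l)) := by
    intro j
    rw [Finset.sum_congr rfl (fun i hi => hmean' i hi j),
        Finset.sum_congr rfl (fun i hi => hmean'' i hi j)]
    exact hEj j
  simp only [hplug]
  -- final algebra
  have hAW : ((A * W) *ᵥ (δ * (hbarM - hbarN))) k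
      = ∑ j, A k j * ∑ l, W j l * (δ l * (hbarM l - hbarN l)) := by
    simp only [mulVec, dotProduct, Matrix.mul_apply, Pi.mul_apply, Pi.sub_apply,
      Finset.sum_mul, Finset.mul_sum]
    rw [Finset.sum_comm]
    exact Finset.sum_congr rfl fun j _ => Finset.sum_congr rfl fun l _ => mul_assoc _ _ _
  rw [hJ, smul_mulVec]
  simp only [Pi.smul_apply, smul_eq_mul]
  rw [hAW, Finset.mul_sum, Finset.mul_sum, Finset.mul_sum]
  refine Finset.sum_congr rfl fun j _ => ?_
  rw [hr]
  linear_combination ((M:ℝ) * c * A k j *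
    (∑ l, W j l * (δ l * (hbarM l - hbarN l)))) * hss
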